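/- With A(n) := ∑_{j=1}^{n} ((−1)^j / j!)·M(n+j, j), where M(n+j, j) counts as above (M(n+1,1) = 1), one has the recursion A(n) = −n·A(n−1) for n ≥ 2, and consequently A(n) = (−1)^n n!. -/

import Mathlib

/-- `M N t` = ∑ over `(n₁,…,n_t)` with `n₁+⋯+n_t = N`, all `nᵢ ≥ 2`, of `N!/(n₁!⋯n_t!)`.
(For `t = 1` and `N ≥ 2` this equals `1`, matching the convention `M(N,1) = 1`.) -/
def Msum (N t : ℕ) : ℕ :=
  ∑ c ∈ (Finset.Nat.antidiagonalTuple t N).filter (fun c => ∀ i, 2 ≤ c i),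
    Nat.multinomial Finset.univ c

/-- `A n = ∑_{j=1}^{n} ((−1)^j / j!)·M(n+j, j)`. -/
def Aseq (n : ℕ) : ℚ :=
  ∑ j ∈ Finset.Icc 1 n, ((-1 : ℚ) ^ j / (j.factorial : ℚ)) * (Msum (n + j) j : ℚ)

open PowerSeries Finset

noncomputable def fps : PowerSeries ℚ := PowerSeries.exp ℚ - 1 - PowerSeries.X

lemma coeff_fps (n : ℕ) :
    PowerSeries.coeff n fps = if 2 ≤ n then 1 / (n.factorial : ℚ) else 0 := by
  rw [fps, map_sub, map_sub, PowerSeries.coeff_exp, PowerSeries.coeff_one, PowerSeries.coeff_X]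
  rcases n with _ | _ | n
  · norm_num
  · norm_num [Nat.factorial]
  · have h : 2 ≤ n + 2 := by omega
    simp [h, Nat.succ_ne_zero]

lemma Msum_coeff (N t : ℕ) :
    (Msum N t : ℚ) = (N.factorial : ℚ) * PowerSeries.coeff N (fps ^ t) := by
  rw [PowerSeries.coeff_pow]
  have bridge : ∑ l ∈ finsuppAntidiag (range t) N, ∏ i ∈ range t, PowerSeries.coeff (l i) fps
      = ∑ c ∈ Finset.Nat.antidiagonalTuple t N, ∏ i : Fin t, PowerSeries.coeff (c i) fps := by
    refine Finset.sum_nbij' (i := fun l => fun i : Fin t => l i)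
      (j := fun c => Finsupp.onFinset (range t)
        (fun x => if h : x < t then c ⟨x, h⟩ else 0) ?_) ?_ ?_ ?_ ?_ ?_
    · intro x hx
      rw [mem_range]
      by_contra h
      simp [h] at hx
    · intro l hl
      rw [mem_finsuppAntidiag] at hl
      rw [Finset.Nat.mem_antidiagonalTuple]
      rw [← hl.1]
      exact (Finset.sum_range fun i => l i).symm
    · intro c hc
      rw [Finset.Nat.mem_antidiagonalTuple] at hc
      rw [mem_finsuppAntidiag]
      constructor
      · rw [← hc]
        rw [Finset.sum_range]
        apply Finset.sum_congr rfl
        intro i _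
        simp [Finsupp.onFinset_apply, i.isLt]
      · exact Finsupp.support_onFinset_subset
    · intro l hl
      rw [mem_finsuppAntidiag] at hl
      ext x
      simp only [Finsupp.onFinset_apply]
      split
      · rfl
      · next h =>
        by_contra h2
        have := hl.2 (Finsupp.mem_support_iff.mpr fun he => h2 he.symm)
        rw [mem_range] at this; exact h this
    · intro c hc
      funext i
      simp [i.isLt]
    · intro l hl
      exact Finset.prod_range fun i => PowerSeries.coeff (l i) fps
  rw [bridge, Finset.mul_sum, Msum]
  rw [← Finset.sum_filter_add_sum_filter_not (Finset.Nat.antidiagonalTuple t N)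
    (fun c => ∀ i, 2 ≤ c i)]
  have h2 : ∑ c ∈ (Finset.Nat.antidiagonalTuple t N).filter (fun c => ¬ ∀ i, 2 ≤ c i),
      (N.factorial : ℚ) * ∏ i : Fin t, PowerSeries.coeff (c i) fps = 0 := by
    apply Finset.sum_eq_zero
    intro c hc
    rw [Finset.mem_filter] at hc
    push_neg at hc
    obtain ⟨i, hi⟩ := hc.2
    have : ∏ i : Fin t, PowerSeries.coeff (c i) fps = 0 := by
      apply Finset.prod_eq_zero (Finset.mem_univ i)
      rw [coeff_fps, if_neg (by omega)]
    rw [this, mul_zero]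
  rw [h2, add_zero]
  push_cast
  apply Finset.sum_congr rfl
  intro c hc
  rw [Finset.mem_filter, Finset.Nat.mem_antidiagonalTuple] at hc
  have hspec : (∏ i : Fin t, (c i).factorial) * Nat.multinomial Finset.univ c = N.factorial := by
    rw [Nat.multinomial_spec, hc.1]
  have hprod : ∏ i : Fin t, PowerSeries.coeff (c i) fps
      = ∏ i : Fin t, 1 / ((c i).factorial : ℚ) := by
    apply Finset.prod_congr rfl
    intro i _
    rw [coeff_fps, if_pos (hc.2 i)]
  rw [hprod]
  have hne : (∏ i : Fin t, ((c i).factorial : ℚ)) ≠ 0 :=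
    Finset.prod_ne_zero_iff.mpr fun i _ => Nat.cast_ne_zero.mpr (Nat.factorial_ne_zero _)
  have := congrArg (Nat.cast : ℕ → ℚ) hspec
  push_cast at this
  rw [Finset.prod_div_distrib]
  field_simp
  simp only [Finset.prod_const_one, mul_one]
  linarith [this]

open scoped PowerSeries in
lemma deriv_fps : PowerSeries.derivative ℚ fps = fps + PowerSeries.X := by
  ext n
  rw [PowerSeries.coeff_derivative, map_add, coeff_fps, coeff_fps, PowerSeries.coeff_X]
  rcases n with _ | _ | n
  · norm_num
  · norm_num [Nat.factorial]
  · have h1 : 2 ≤ n + 2 := by omega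
    have h2 : 2 ≤ n + 3 := by omega
    rw [if_pos h1, if_pos h2, if_neg (by omega), add_zero]
    have : ((n+3).factorial : ℚ) = (n + 3) * (n+2).factorial := by
      rw [show n + 3 = (n+2) + 1 from rfl, Nat.factorial_succ]; push_cast; ring
    rw [this]
    have hne : ((n+2).factorial : ℚ) ≠ 0 := Nat.cast_ne_zero.mpr (Nat.factorial_ne_zero _)
    field_simp
    push_cast; ring

lemma star (m k : ℕ) :
    (Msum (m + 2) (k + 1) : ℚ)
      = (k + 1) * Msum (m + 1) (k + 1) + (k + 1) * (m + 1) * Msum m k := by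
  have hd : PowerSeries.derivative ℚ (fps ^ (k + 1))
      = (k + 1) • (fps ^ (k + 1) + PowerSeries.X * fps ^ k) := by
    rw [Derivation.leibniz_pow, deriv_fps]
    rw [Nat.add_sub_cancel]
    congr 1
    rw [smul_eq_mul]
    ring
  have key := congrArg (PowerSeries.coeff (m + 1)) hd
  rw [PowerSeries.coeff_derivative, map_nsmul, map_add,
    PowerSeries.coeff_succ_X_mul] at key
  rw [Msum_coeff, Msum_coeff, Msum_coeff]
  have h2 : ((m + 2).factorial : ℚ) = (m + 2) * (m + 1).factorial := by
    rw [show m + 2 = (m + 1) + 1 from rfl, Nat.factorial_succ]; push_cast; ring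
  have h1 : ((m + 1).factorial : ℚ) = (m + 1) * m.factorial := by
    rw [Nat.factorial_succ]; push_cast; ring
  rw [h2, h1]
  have key' : PowerSeries.coeff (m + 2) (fps ^ (k + 1)) * ((m:ℚ) + 1 + 1)
      = ((k:ℚ) + 1) * (PowerSeries.coeff (m + 1) (fps ^ (k + 1))
        + PowerSeries.coeff m (fps ^ k)) := by
    rw [nsmul_eq_mul] at key
    push_cast at key ⊢
    linarith [key]
  push_cast
  nlinarith [key', mul_pos (Nat.cast_pos.mpr (Nat.factorial_pos m) : (0:ℚ) < m.factorial) (by positivity : (0:ℚ) < 1)]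

lemma Msum_eq_zero_of_lt {N t : ℕ} (h : N < 2 * t) : Msum N t = 0 := by
  rw [Msum, Finset.filter_false_of_mem, Finset.sum_empty]
  intro c hc
  rw [Finset.Nat.mem_antidiagonalTuple] at hc
  intro hall
  have : 2 * t ≤ N := by
    calc 2 * t = ∑ _i : Fin t, 2 := by simp [mul_comm]
    _ ≤ ∑ i : Fin t, c i := Finset.sum_le_sum fun i _ => hall i
    _ = N := hc
  omega

lemma Msum_zero_right {N : ℕ} (h : N ≠ 0) : Msum N 0 = 0 := by
  obtain ⟨n, rfl⟩ := Nat.exists_eq_succ_of_ne_zero h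
  rw [Msum, Finset.Nat.antidiagonalTuple_zero_succ]
  simp

lemma Msum_two_one : Msum 2 1 = 1 := by decide

lemma sum_Icc_one (f : ℕ → ℚ) (n : ℕ) :
    ∑ j ∈ Finset.Icc 1 n, f j = ∑ i ∈ Finset.range n, f (i + 1) := by
  induction n with
  | zero => simp
  | succ n ih => rw [Finset.sum_Icc_succ_top (by omega), Finset.sum_range_succ, ih]

lemma Aseq_rec (n : ℕ) (hn : 2 ≤ n) : Aseq n = -(n : ℚ) * Aseq (n - 1) := by
  obtain ⟨m, rfl⟩ : ∃ m, n = m + 2 := ⟨n - 2, by omega⟩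
  have hsub : m + 2 - 1 = m + 1 := by omega
  rw [hsub, Aseq, Aseq, sum_Icc_one, sum_Icc_one]
  have step : ∀ i ∈ Finset.range (m + 2),
      ((-1 : ℚ) ^ (i + 1) / ((i + 1).factorial : ℚ)) * (Msum (m + 2 + (i + 1)) (i + 1) : ℚ)
        = ((-1 : ℚ) ^ (i + 1) / ((i).factorial : ℚ)) * (Msum (m + 1 + (i + 1)) (i + 1) : ℚ)
          + ((-1 : ℚ) ^ (i + 1) * ((m : ℚ) + 2 + i) / ((i).factorial : ℚ))
            * (Msum (m + 1 + i) i : ℚ) := by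
    intro i _
    have harg : m + 2 + (i + 1) = (m + i + 1) + 2 := by omega
    have harg2 : m + 1 + (i + 1) = (m + i + 1) + 1 := by omega
    have harg3 : m + 1 + i = m + i + 1 := by omega
    rw [harg, harg2, harg3, star (m + i + 1) i]
    have hfac : ((i + 1).factorial : ℚ) = (i + 1) * (i.factorial : ℚ) := by
      rw [Nat.factorial_succ]; push_cast; ring
    rw [hfac]
    have h1 : ((i : ℚ) + 1) ≠ 0 := by positivity
    have h2 : ((i).factorial : ℚ) ≠ 0 := Nat.cast_ne_zero.mpr (Nat.factorial_ne_zero _)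
    field_simp
    push_cast
    ring
  rw [Finset.sum_congr rfl step, Finset.sum_add_distrib]
  -- second sum: peel off bottom (i = 0) term, which vanishes
  rw [Finset.sum_range_succ' (fun i =>
    ((-1 : ℚ) ^ (i + 1) * ((m : ℚ) + 2 + i) / ((i).factorial : ℚ)) * (Msum (m + 1 + i) i : ℚ))]
  have hz : ((-1 : ℚ) ^ (0 + 1) * ((m : ℚ) + 2 + ((0:ℕ):ℚ)) / ((0 : ℕ).factorial : ℚ))
      * (Msum (m + 1 + 0) 0 : ℚ) = 0 := by
    rw [Msum_zero_right (by omega)]; simp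
  rw [hz, add_zero]
  -- first sum: peel off top (i = m + 1) term, which vanishes
  rw [Finset.sum_range_succ (fun i =>
    ((-1 : ℚ) ^ (i + 1) / ((i).factorial : ℚ)) * (Msum (m + 1 + (i + 1)) (i + 1) : ℚ))]
  have hz2 : ((-1 : ℚ) ^ (m + 1 + 1) / (((m + 1)).factorial : ℚ))
      * (Msum (m + 1 + (m + 1 + 1)) (m + 1 + 1) : ℚ) = 0 := by
    rw [Msum_eq_zero_of_lt (by omega)]; simp
  rw [hz2, add_zero, ← Finset.sum_add_distrib, Finset.mul_sum]
  apply Finset.sum_congr rfl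
  intro i _
  have hfac : ((i + 1).factorial : ℚ) = (i + 1) * (i.factorial : ℚ) := by
    rw [Nat.factorial_succ]; push_cast; ring
  have h1 : ((i : ℚ) + 1) ≠ 0 := by positivity
  have h2 : ((i).factorial : ℚ) ≠ 0 := Nat.cast_ne_zero.mpr (Nat.factorial_ne_zero _)
  rw [hfac]
  field_simp
  push_cast
  ring

lemma Aseq_val (n : ℕ) (hn : 1 ≤ n) : Aseq n = (-1 : ℚ) ^ n * (n.factorial : ℚ) := by
  induction n with
  | zero => omega
  | succ n ih =>
    rcases Nat.eq_or_lt_of_le hn with h | h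
    · rw [← h]
      rw [Aseq]
      norm_num [Msum_two_one, Nat.factorial]
    · have hn1 : 1 ≤ n := by omega
      have := Aseq_rec (n + 1) (by omega)
      rw [Nat.add_sub_cancel] at this
      rw [this, ih hn1, Nat.factorial_succ]
      push_cast
      ring

theorem stmt_10 :
    (∀ n : ℕ, 2 ≤ n → Aseq n = -(n : ℚ) * Aseq (n - 1)) ∧
      (∀ n : ℕ, 1 ≤ n → Aseq n = (-1 : ℚ) ^ n * (n.factorial : ℚ)) :=
  ⟨Aseq_rec, Aseq_val⟩
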